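/- Let V be a finite-dimensional complex inner product space with dim V = N, let v : Fin m → V be a family of vectors, and let H : Matrix (Fin N) (Fin m) ℂ be a matrix such that (Hᴴ · H)(j, j') = ⟨v_j, v_{j'}⟩ for all j, j' ∈ Fin m. Then there exists an orthonormal basis (e_I)_{I ∈ Fin N} of V such that ⟨e_I, v_j⟩ = H(I, j) for all I ∈ Fin N and j ∈ Fin m. -/

import Mathlib

open scoped InnerProductSpace
open Matrix

section Aux

variable {m N : ℕ}

/-- Auxiliary: two families in Euclidean space with equal pairwise inner products are
related by a global linear isometry equivalence. -/
theorem exists_isometryEquiv_map_eq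
    (h w : Fin m → EuclideanSpace ℂ (Fin N))
    (hinner : ∀ j j', ⟪h j, h j'⟫_ℂ = ⟪w j, w j'⟫_ℂ) :
    ∃ U : EuclideanSpace ℂ (Fin N) ≃ₗᵢ[ℂ] EuclideanSpace ℂ (Fin N),
      ∀ j, U (h j) = w j := by
  classical
  let E := EuclideanSpace ℂ (Fin N)
  let A : (Fin m → ℂ) →ₗ[ℂ] E := Fintype.linearCombination ℂ h
  let B : (Fin m → ℂ) →ₗ[ℂ] E := Fintype.linearCombination ℂ w
  have hA : ∀ x, A x = ∑ j, x j • h j := fun x => rfl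
  have hB : ∀ x, B x = ∑ j, x j • w j := fun x => rfl
  have key : ∀ x y, ⟪A x, A y⟫_ℂ = ⟪B x, B y⟫_ℂ := by
    intro x y
    rw [hA, hA, hB, hB]
    rw [sum_inner, sum_inner]
    refine Finset.sum_congr rfl fun j _ => ?_
    rw [inner_sum, inner_sum]
    refine Finset.sum_congr rfl fun j' _ => ?_
    rw [inner_smul_left, inner_smul_left, inner_smul_right, inner_smul_right, hinner]
  have hker : LinearMap.ker A ≤ LinearMap.ker B := by
    intro x hx
    rw [LinearMap.mem_ker] at hx ⊢
    have : ⟪B x, B x⟫_ℂ = 0 := by rw [← key, hx, inner_zero_right]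
    exact inner_self_eq_zero.mp this
  let q : ((Fin m → ℂ) ⧸ LinearMap.ker A) ≃ₗ[ℂ] LinearMap.range A :=
    LinearMap.quotKerEquivRange A
  let L0 : (LinearMap.range A) →ₗ[ℂ] E :=
    (LinearMap.ker A).liftQ B hker ∘ₗ (q.symm : (LinearMap.range A) →ₗ[ℂ] _)
  have hL0 : ∀ x : Fin m → ℂ, L0 ⟨A x, LinearMap.mem_range_self A x⟩ = B x := by
    intro x
    have hq : q (Submodule.Quotient.mk x) = ⟨A x, LinearMap.mem_range_self A x⟩ := rfl
    have : q.symm ⟨A x, LinearMap.mem_range_self A x⟩ = Submodule.Quotient.mk x := by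
      rw [← hq, LinearEquiv.symm_apply_apply]
    simp only [L0, LinearMap.comp_apply, LinearEquiv.coe_coe, this]
    rfl
  have hnorm : ∀ s : LinearMap.range A, ‖L0 s‖ = ‖s‖ := by
    rintro ⟨s, x, rfl⟩
    rw [hL0 x]
    have h1 : ⟪B x, B x⟫_ℂ = ⟪A x, A x⟫_ℂ := (key x x).symm
    have h2 := (inner_self_eq_norm_sq_to_K (𝕜 := ℂ) (B x)).symm.trans
      (h1.trans (inner_self_eq_norm_sq_to_K (𝕜 := ℂ) (A x)))
    have h3 : ‖B x‖ ^ 2 = ‖A x‖ ^ 2 := by exact_mod_cast h2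
    exact (sq_eq_sq₀ (norm_nonneg _) (norm_nonneg _)).mp h3
  let L : (LinearMap.range A) →ₗᵢ[ℂ] E := ⟨L0, hnorm⟩
  let U0 : E →ₗᵢ[ℂ] E := L.extend
  have hU0 : ∀ j, U0 (h j) = w j := by
    intro j
    have hh : h j = A (Pi.single j 1) := by
      rw [hA]; simp [Pi.single_apply]
    have hw : w j = B (Pi.single j 1) := by
      rw [hB]; simp [Pi.single_apply]
    have hmem : h j ∈ LinearMap.range A := hh ▸ LinearMap.mem_range_self A _
    have : U0 (h j) = L ⟨h j, hmem⟩ := L.extend_apply ⟨h j, hmem⟩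
    rw [this]
    have : (⟨h j, hmem⟩ : LinearMap.range A) =
        ⟨A (Pi.single j 1), LinearMap.mem_range_self A _⟩ := by
      exact Subtype.ext hh
    rw [show (L ⟨h j, hmem⟩ : E) = L0 ⟨h j, hmem⟩ from rfl, this, hL0, ← hw]
  have hsurj : Function.Surjective U0 := by
    have hinj : Function.Injective U0.toLinearMap := U0.injective
    exact (LinearMap.injective_iff_surjective).mp hinj
  exact ⟨LinearIsometryEquiv.ofSurjective U0 hsurj, fun j => hU0 j⟩

end Aux

/-- **Key linear-algebra lemma.** If a matrix `H` has `Hᴴ * H` equal to the Gram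
matrix of a family of vectors `v` in an `N`-dimensional complex inner product space,
then there is an orthonormal basis `e` with `⟪e I, v j⟫ = H I j`. -/
theorem exists_orthonormalBasis_of_gram_eq
    (N m : ℕ) (V : Type*) [NormedAddCommGroup V] [InnerProductSpace ℂ V]
    [FiniteDimensional ℂ V] (hN : Module.finrank ℂ V = N)
    (v : Fin m → V) (H : Matrix (Fin N) (Fin m) ℂ)
    (hGram : ∀ j j' : Fin m, (Hᴴ * H) j j' = ⟪v j, v j'⟫_ℂ) :
    ∃ e : OrthonormalBasis (Fin N) ℂ V,
      ∀ (I : Fin N) (j : Fin m), ⟪e I, v j⟫_ℂ = H I j := by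
  classical
  let b : OrthonormalBasis (Fin N) ℂ V :=
    (stdOrthonormalBasis ℂ V).reindex (finCongr hN)
  let h : Fin m → EuclideanSpace ℂ (Fin N) := fun j => WithLp.toLp 2 (fun I => H I j)
  let w : Fin m → EuclideanSpace ℂ (Fin N) := fun j => b.repr (v j)
  have hinner : ∀ j j', ⟪h j, h j'⟫_ℂ = ⟪w j, w j'⟫_ℂ := by
    intro j j'
    have h1 : ⟪h j, h j'⟫_ℂ = (Hᴴ * H) j j' := by
      rw [Matrix.mul_apply]
      simp [PiLp.inner_apply, Matrix.conjTranspose_apply, h, RCLike.inner_apply, mul_comm]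
    have h2 : ⟪w j, w j'⟫_ℂ = ⟪v j, v j'⟫_ℂ := b.repr.inner_map_map _ _
    rw [h1, h2, hGram]
  obtain ⟨U, hU⟩ := exists_isometryEquiv_map_eq h w hinner
  refine ⟨(EuclideanSpace.basisFun (Fin N) ℂ).map (U.trans b.repr.symm), ?_⟩
  intro I j
  have he : ((EuclideanSpace.basisFun (Fin N) ℂ).map (U.trans b.repr.symm)) I
      = b.repr.symm (U (EuclideanSpace.single I 1)) := by
    simp [OrthonormalBasis.map_apply]
  have hv : v j = b.repr.symm (w j) := by simp [w]
  rw [he, hv, b.repr.symm.inner_map_map, ← hU j, U.inner_map_map]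
  simp [EuclideanSpace.inner_single_left, h]
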